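/- Let H ∈ (1/2, 1), set α_H = H(2H−1) and φ(y) = α_H |y|^{2H−2} for y ≠ 0, and let κ₁, κ₂ ∈ {0, 1}. Then there exists a constant C > 0, depending only on H, such that for all λ > 0 and all t > 0, one has λ^{2H+κ₁+κ₂} ∫₀^t ∫₀^t u^{κ₁} v^{κ₂} e^{−λ(u+v)} φ(u−v) du dv ≤ C. -/

import Mathlib

open MeasureTheory Set Real intervalIntegral

lemma aux_exp_int {m : ℝ} (hm : 0 < m) :
    ∫ x in Ioi (0:ℝ), Real.exp (-m * x) = m⁻¹ := by
  have h := integral_comp_mul_left_Ioi (fun x => Real.exp (-x)) 0 hm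
  simp only [mul_zero, integral_exp_neg_Ioi_zero, smul_eq_mul, mul_one, neg_mul] at h ⊢
  rw [h]

lemma aux_exp_intOn {m : ℝ} (hm : 0 < m) :
    IntegrableOn (fun x => Real.exp (-m * x)) (Ioi (0:ℝ)) :=
  exp_neg_integrableOn_Ioi 0 hm

lemma aux_II0 {r : ℝ} (hr : -1 < r) (c : ℝ) :
    IntervalIntegrable (fun x => |x| ^ r) volume 0 c := by
  have h0 : ∀ c : ℝ, 0 ≤ c → IntervalIntegrable (fun x => |x| ^ r) volume 0 c := by
    intro c hc
    rw [intervalIntegrable_iff_integrableOn_Ioc_of_le hc]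
    refine (intervalIntegrable_rpow' (a := 0) (b := c) hr).1.congr_fun ?_ measurableSet_Ioc
    intro x hx
    simp [abs_of_pos hx.1]
  rcases le_or_gt 0 c with hc | hc
  · exact h0 c hc
  · have := ((IntervalIntegrable.iff_comp_neg (by simp)).mp (h0 (-c) (by linarith))).symm
    simpa [abs_neg] using this.symm

lemma aux_abs_rpow_int {r : ℝ} (hr : -1 < r) {d : ℝ} (hd : 0 ≤ d) :
    ∫ x in (-d)..d, |x| ^ r = 2 * d ^ (r + 1) / (r + 1) := by
  have hr1 : r + 1 ≠ 0 := by linarith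
  have J : ∫ x in (0:ℝ)..d, |x| ^ r = d ^ (r + 1) / (r + 1) := by
    rw [show (∫ x in (0:ℝ)..d, |x| ^ r) = ∫ x in (0:ℝ)..d, x ^ r from
      intervalIntegral.integral_congr fun x hx => by
        rw [uIcc_of_le hd] at hx
        simp [abs_of_nonneg hx.1]]
    rw [integral_rpow (Or.inl hr), Real.zero_rpow hr1, sub_zero]
  have Jneg : ∫ x in (-d)..(0:ℝ), |x| ^ r = d ^ (r + 1) / (r + 1) := by
    have := intervalIntegral.integral_comp_neg (a := 0) (b := d) (fun x => |x| ^ r)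
    simp only [abs_neg, neg_zero] at this
    rw [← this, J]
  rw [← intervalIntegral.integral_add_adjacent_intervals (aux_II0 hr (-d)).symm (aux_II0 hr d),
    Jneg, J]
  ring

lemma aux_shift_II {r : ℝ} (hr : -1 < r) {d : ℝ} (u : ℝ) :
    IntegrableOn (fun v => |v - u| ^ r) (Icc (u - d) (u + d)) := by
  have h := ((aux_II0 hr (-d)).symm.trans (aux_II0 hr d)).comp_sub_right u
  have e1 : -d + u = u - d := by ring
  have e2 : d + u = u + d := by ring
  rw [e1, e2] at h
  rcases le_or_gt (u - d) (u + d) with hle | hlt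
  · rw [integrableOn_Icc_iff_integrableOn_Ioc]
    exact (intervalIntegrable_iff_integrableOn_Ioc_of_le hle).mp h
  · rw [Icc_eq_empty (by linarith)]
    simp

lemma aux_shift_int {r : ℝ} (hr : -1 < r) {d : ℝ} (hd : 0 ≤ d) (u : ℝ) :
    ∫ v in Icc (u - d) (u + d), |v - u| ^ r = 2 * d ^ (r + 1) / (r + 1) := by
  rw [integral_Icc_eq_integral_Ioc,
    ← intervalIntegral.integral_of_le (by linarith : u - d ≤ u + d),
    intervalIntegral.integral_comp_sub_right (fun x => |x| ^ r) u]
  have e1 : u - d - u = -d := by ring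
  have e2 : u + d - u = d := by ring
  rw [e1, e2, aux_abs_rpow_int hr hd]

noncomputable def gfn (r m d u : ℝ) : ℝ → ℝ := fun v =>
  Set.indicator (Icc (u - d) (u + d)) (fun v => |v - u| ^ r) v +
    Set.indicator (Ioi 0) (fun v => d ^ r * Real.exp (-m * v)) v

lemma gfn_integrable {r m d : ℝ} (hr1 : -1 < r) (hm : 0 < m) (u : ℝ) :
    Integrable (gfn r m d u) := by
  refine Integrable.add ?_ ?_
  · exact (aux_shift_II hr1 u).integrable_indicator measurableSet_Icc
  · exact IntegrableOn.integrable_indicator ((aux_exp_intOn hm).const_mul (d ^ r)) measurableSet_Ioi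

lemma gfn_nonneg {r m d : ℝ} (hd : 0 ≤ d) (u : ℝ) : ∀ v, 0 ≤ gfn r m d u v := by
  intro v
  refine add_nonneg ?_ ?_
  · exact Set.indicator_nonneg (fun x _ => Real.rpow_nonneg (abs_nonneg _) r) v
  · exact Set.indicator_nonneg
      (fun x _ => mul_nonneg (Real.rpow_nonneg hd r) (Real.exp_pos _).le) v

lemma gfn_integral {r m d : ℝ} (hr1 : -1 < r) (hm : 0 < m) (hd : d = m⁻¹) (u : ℝ) :
    ∫ v, gfn r m d u v = (2 / (r + 1) + 1) * d ^ (r + 1) := by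
  have hd0 : 0 < d := hd ▸ inv_pos.mpr hm
  simp only [gfn]
  rw [MeasureTheory.integral_add ((aux_shift_II hr1 u).integrable_indicator measurableSet_Icc)
      (IntegrableOn.integrable_indicator ((aux_exp_intOn hm).const_mul (d ^ r)) measurableSet_Ioi),
    MeasureTheory.integral_indicator measurableSet_Icc, MeasureTheory.integral_indicator measurableSet_Ioi,
    aux_shift_int hr1 hd0.le u, MeasureTheory.integral_const_mul, aux_exp_int hm, ← hd,
    ← Real.rpow_add_one hd0.ne' r]
  ring

lemma gfn_ptwise {r m d : ℝ} (hr0 : r ≤ 0) (hm : 0 < m) (hd : 0 < d) (u : ℝ)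
    {v : ℝ} (hv : 0 < v) :
    Real.exp (-m * v) * |v - u| ^ r ≤ gfn r m d u v := by
  have hexp : Real.exp (-m * v) ≤ 1 := by
    rw [Real.exp_le_one_iff]
    nlinarith
  rcases le_or_gt (|v - u|) d with h | h
  · have hmem : v ∈ Icc (u - d) (u + d) := by
      rw [abs_le] at h
      constructor <;> [linarith [h.1]; linarith [h.2]]
    have : Real.exp (-m * v) * |v - u| ^ r ≤ |v - u| ^ r := by
      nlinarith [Real.rpow_nonneg (abs_nonneg (v - u)) r, Real.exp_pos (-m * v)]
    calc Real.exp (-m * v) * |v - u| ^ r ≤ |v - u| ^ r := this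
      _ = Set.indicator (Icc (u - d) (u + d)) (fun v => |v - u| ^ r) v := by
          rw [Set.indicator_of_mem hmem]
      _ ≤ gfn r m d u v := le_add_of_nonneg_right
          (Set.indicator_nonneg (fun x _ => mul_nonneg (Real.rpow_nonneg hd.le r)
            (Real.exp_pos _).le) v)
  · have habs : |v - u| ^ r ≤ d ^ r := Real.rpow_le_rpow_of_nonpos hd h.le hr0
    calc Real.exp (-m * v) * |v - u| ^ r ≤ Real.exp (-m * v) * d ^ r := by
          nlinarith [Real.exp_pos (-m * v)]
      _ = Set.indicator (Ioi 0) (fun v => d ^ r * Real.exp (-m * v)) v := by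
          rw [Set.indicator_of_mem (mem_Ioi.mpr hv)]; ring
      _ ≤ gfn r m d u v := le_add_of_nonneg_left
          (Set.indicator_nonneg (fun x _ => Real.rpow_nonneg (abs_nonneg _) r) v)

lemma pow_exp_le {m d v : ℝ} (hm : 0 < m) (hd : d = m⁻¹) (hv : 0 ≤ v) {κ : ℕ} (hκ : κ ≤ 1) :
    v ^ κ * Real.exp (-m * v) ≤ d ^ κ := by
  interval_cases κ
  · have hle : -m * v ≤ 0 := by nlinarith
    simpa using Real.exp_le_one_iff.mpr hle
  · have h := Real.add_one_le_exp (m * v)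
    have hE := Real.exp_pos (m * v)
    rw [pow_one, pow_one, neg_mul, Real.exp_neg, hd, inv_eq_one_div, inv_eq_one_div,
      mul_one_div, div_le_div_iff₀ hE hm]
    nlinarith

/-- For `H ∈ (1/2, 1)`, `φ(y) = H(2H-1)|y|^{2H-2}` and
`κ₁, κ₂ ∈ {0, 1}`, there is `C > 0` depending only on `H` such that for all
`λ > 0` and `t > 0`,
`λ^{2H+κ₁+κ₂} ∫₀^t ∫₀^t u^{κ₁} v^{κ₂} e^{-λ(u+v)} φ(u-v) du dv ≤ C`. -/
theorem stmt_11 (H : ℝ) (hH : H ∈ Set.Ioo (1/2 : ℝ) 1) :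
    ∃ C : ℝ, 0 < C ∧ ∀ κ₁ κ₂ : ℕ, κ₁ ≤ 1 → κ₂ ≤ 1 →
      ∀ l : ℝ, 0 < l → ∀ t : ℝ, 0 < t →
      l ^ (2*H + (κ₁ : ℝ) + (κ₂ : ℝ)) *
        (∫ u in Set.Ioo (0:ℝ) t, ∫ v in Set.Ioo (0:ℝ) t,
            u ^ κ₁ * v ^ κ₂ * Real.exp (-l * (u + v)) *
              (H * (2*H - 1) * |u - v| ^ (2*H - 2)))
        ≤ C := by
  obtain ⟨hH1, hH2⟩ := hH
  have hH21 : 0 < 2 * H - 1 := by linarith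
  set r : ℝ := 2 * H - 2 with hr_def
  have hr1 : (-1 : ℝ) < r := by rw [hr_def]; linarith
  have hr0 : r < 0 := by rw [hr_def]; linarith
  set A : ℝ := H * (2 * H - 1) with hA_def
  have hA : 0 < A := by nlinarith
  set c : ℝ := 2 / (r + 1) + 1 with hc_def
  have hc : 0 < c := by
    have : 0 < r + 1 := by linarith
    positivity
  refine ⟨16 * A * c, by positivity, ?_⟩
  intro κ₁ κ₂ hκ₁ hκ₂ l hl t ht
  set m : ℝ := l / 2 with hm_def
  have hm : 0 < m := by positivity
  set d : ℝ := 2 / l with hd_def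
  have hd : d = m⁻¹ := by rw [hd_def, hm_def, inv_div]
  have hd0 : 0 < d := by positivity
  have hexp_split : ∀ x : ℝ, Real.exp (-l * x) = Real.exp (-m * x) * Real.exp (-m * x) := by
    intro x
    rw [← Real.exp_add]
    rw [hm_def]; ring_nf
  -- inner bound
  have hinner : ∀ u ∈ Ioo (0:ℝ) t,
      (∫ v in Ioo (0:ℝ) t, u ^ κ₁ * v ^ κ₂ * Real.exp (-l * (u + v)) * (A * |u - v| ^ r))
        ≤ (A * (u ^ κ₁ * Real.exp (-l * u)) * d ^ κ₂) * (c * d ^ (r + 1)) := by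
    intro u hu
    set K : ℝ := A * (u ^ κ₁ * Real.exp (-l * u)) * d ^ κ₂ with hK_def
    have hK : 0 ≤ K := by
      have := hu.1.le
      positivity
    calc (∫ v in Ioo (0:ℝ) t, u ^ κ₁ * v ^ κ₂ * Real.exp (-l * (u + v)) * (A * |u - v| ^ r))
        ≤ ∫ v in Ioo (0:ℝ) t, K * gfn r m d u v := by
          refine integral_mono_of_nonneg ?_ (((gfn_integrable hr1 hm u).const_mul K).restrict) ?_
          · filter_upwards [ae_restrict_mem measurableSet_Ioo] with v hv
            have h1 := hu.1.le
            have h2 := hv.1.le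
            positivity
          · filter_upwards [ae_restrict_mem measurableSet_Ioo] with v hv
            have key1 : v ^ κ₂ * Real.exp (-m * v) ≤ d ^ κ₂ := pow_exp_le hm hd hv.1.le hκ₂
            have key2 : Real.exp (-m * v) * |v - u| ^ r ≤ gfn r m d u v :=
              gfn_ptwise hr0.le hm hd0 u hv.1
            have e1 : u ^ κ₁ * v ^ κ₂ * Real.exp (-l * (u + v)) * (A * |u - v| ^ r)
                = (A * (u ^ κ₁ * Real.exp (-l * u)))
                    * ((v ^ κ₂ * Real.exp (-m * v)) * (Real.exp (-m * v) * |v - u| ^ r)) := by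
              rw [abs_sub_comm u v, show (-l * (u + v)) = (-l * u) + ((-m * v) + (-m * v)) by
                rw [hm_def]; ring, Real.exp_add, Real.exp_add]
              ring
            have e2 : K * gfn r m d u v
                = (A * (u ^ κ₁ * Real.exp (-l * u))) * (d ^ κ₂ * gfn r m d u v) := by
              rw [hK_def]; ring
            rw [e1, e2]
            refine mul_le_mul_of_nonneg_left ?_ (by have := hu.1.le; positivity)
            refine mul_le_mul key1 key2 ?_ ?_
            · positivity
            · exact pow_nonneg hd0.le _
      _ = K * ∫ v in Ioo (0:ℝ) t, gfn r m d u v := MeasureTheory.integral_const_mul K _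
      _ ≤ K * ∫ v, gfn r m d u v := by
          refine mul_le_mul_of_nonneg_left ?_ hK
          refine setIntegral_le_integral (gfn_integrable hr1 hm u) ?_
          exact Filter.Eventually.of_forall (gfn_nonneg hd0.le u)
      _ = K * (c * d ^ (r + 1)) := by rw [gfn_integral hr1 hm hd u, hc_def]
  -- outer bound
  set M : ℝ := A * d ^ κ₂ * (c * d ^ (r + 1)) * d ^ κ₁ with hM_def
  have hM : 0 ≤ M := by positivity
  have houter : (∫ u in Ioo (0:ℝ) t, ∫ v in Ioo (0:ℝ) t,
      u ^ κ₁ * v ^ κ₂ * Real.exp (-l * (u + v)) * (A * |u - v| ^ r)) ≤ M * d := by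
    calc (∫ u in Ioo (0:ℝ) t, ∫ v in Ioo (0:ℝ) t,
        u ^ κ₁ * v ^ κ₂ * Real.exp (-l * (u + v)) * (A * |u - v| ^ r))
        ≤ ∫ u in Ioo (0:ℝ) t, M * Real.exp (-m * u) := by
          refine integral_mono_of_nonneg ?_ ?_ ?_
          · filter_upwards [ae_restrict_mem measurableSet_Ioo] with u hu
            refine setIntegral_nonneg measurableSet_Ioo fun v hv => ?_
            have h1 := hu.1.le
            have h2 := hv.1.le
            positivity
          · exact (((aux_exp_intOn hm).mono_set Ioo_subset_Ioi_self).const_mul M)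
          · filter_upwards [ae_restrict_mem measurableSet_Ioo] with u hu
            refine le_trans (hinner u hu) ?_
            have key1 : u ^ κ₁ * Real.exp (-l * u) ≤ d ^ κ₁ * Real.exp (-m * u) := by
              rw [hexp_split u, ← mul_assoc]
              exact mul_le_mul_of_nonneg_right (pow_exp_le hm hd hu.1.le hκ₁)
                (Real.exp_pos _).le
            have e3 : A * (u ^ κ₁ * Real.exp (-l * u)) * d ^ κ₂ * (c * d ^ (r + 1))
                = (A * d ^ κ₂ * (c * d ^ (r + 1))) * (u ^ κ₁ * Real.exp (-l * u)) := by ring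
            have e4 : M * Real.exp (-m * u)
                = (A * d ^ κ₂ * (c * d ^ (r + 1))) * (d ^ κ₁ * Real.exp (-m * u)) := by
              rw [hM_def]; ring
            rw [e3, e4]
            refine mul_le_mul_of_nonneg_left key1 ?_
            positivity
      _ = M * ∫ u in Ioo (0:ℝ) t, Real.exp (-m * u) := MeasureTheory.integral_const_mul M _
      _ ≤ M * ∫ u in Ioi (0:ℝ), Real.exp (-m * u) := by
          refine mul_le_mul_of_nonneg_left ?_ hM
          refine setIntegral_mono_set (aux_exp_intOn hm) ?_ ?_
          · exact Filter.Eventually.of_forall fun x => (Real.exp_pos _).le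
          · exact HasSubset.Subset.eventuallyLE Ioo_subset_Ioi_self
      _ = M * d := by rw [aux_exp_int hm, hd]
  -- final algebra
  have hgoal : l ^ (2*H + (κ₁ : ℝ) + (κ₂ : ℝ)) * (M * d) ≤ 16 * A * c := by
    have hld : l * d = 2 := by rw [hd_def]; field_simp
    have hdd : d ^ (2*H : ℝ) = d ^ (r + 1) * d := by
      rw [show (2*H : ℝ) = (r + 1) + 1 by rw [hr_def]; ring, Real.rpow_add_one hd0.ne']
    have e5 : M * d = A * c * (d ^ (2*H : ℝ) * d ^ κ₁ * d ^ κ₂) := by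
      rw [hM_def, hdd]; ring
    have e6 : l ^ (2*H + (κ₁ : ℝ) + (κ₂ : ℝ))
        = l ^ (2*H : ℝ) * l ^ κ₁ * l ^ κ₂ := by
      rw [Real.rpow_add hl, Real.rpow_add hl, Real.rpow_natCast, Real.rpow_natCast]
    rw [e5, e6]
    have e7 : l ^ (2*H : ℝ) * l ^ κ₁ * l ^ κ₂ * (A * c * (d ^ (2*H : ℝ) * d ^ κ₁ * d ^ κ₂))
        = A * c * ((l ^ (2*H : ℝ) * d ^ (2*H : ℝ)) * ((l*d) ^ κ₁ * (l*d) ^ κ₂)) := by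
      rw [mul_pow, mul_pow]; ring
    rw [e7, ← Real.mul_rpow hl.le hd0.le, hld]
    have h2H : (2:ℝ) ^ (2*H : ℝ) ≤ 4 := by
      calc (2:ℝ) ^ (2*H : ℝ) ≤ (2:ℝ) ^ (2:ℝ) :=
        Real.rpow_le_rpow_of_exponent_le one_le_two (by linarith)
      _ = 4 := by norm_num [show (2:ℝ) = ((2:ℕ):ℝ) from rfl, Real.rpow_natCast]
    have h2H0 : (0:ℝ) < (2:ℝ) ^ (2*H : ℝ) := Real.rpow_pos_of_pos two_pos _
    have hp1 : (2:ℝ) ^ κ₁ ≤ 2 := by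
      interval_cases κ₁ <;> norm_num
    have hp2 : (2:ℝ) ^ κ₂ ≤ 2 := by
      interval_cases κ₂ <;> norm_num
    have hp10 : (0:ℝ) < 2 ^ κ₁ := by positivity
    have hp20 : (0:ℝ) < 2 ^ κ₂ := by positivity
    have h12 : (2:ℝ) ^ κ₁ * 2 ^ κ₂ ≤ 4 := by
      calc (2:ℝ) ^ κ₁ * 2 ^ κ₂ ≤ 2 * 2 := mul_le_mul hp1 hp2 hp20.le (by norm_num)
        _ = 4 := by norm_num
    have h12' : (0:ℝ) < 2 ^ κ₁ * (2:ℝ) ^ κ₂ := by positivity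
    have hq : (2:ℝ) ^ (2*H : ℝ) * (2 ^ κ₁ * 2 ^ κ₂) ≤ 16 := by
      calc (2:ℝ) ^ (2*H : ℝ) * (2 ^ κ₁ * 2 ^ κ₂) ≤ 4 * 4 :=
        mul_le_mul h2H h12 h12'.le (by norm_num)
        _ = 16 := by norm_num
    calc A * c * ((2:ℝ) ^ (2*H : ℝ) * (2 ^ κ₁ * 2 ^ κ₂)) ≤ A * c * 16 :=
      mul_le_mul_of_nonneg_left hq (by positivity)
      _ = 16 * A * c := by ring
  calc l ^ (2*H + (κ₁ : ℝ) + (κ₂ : ℝ)) *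
        (∫ u in Set.Ioo (0:ℝ) t, ∫ v in Set.Ioo (0:ℝ) t,
            u ^ κ₁ * v ^ κ₂ * Real.exp (-l * (u + v)) *
              (H * (2*H - 1) * |u - v| ^ (2*H - 2)))
      ≤ l ^ (2*H + (κ₁ : ℝ) + (κ₂ : ℝ)) * (M * d) := by
        refine mul_le_mul_of_nonneg_left ?_ (Real.rpow_nonneg hl.le _)
        exact houter
    _ ≤ 16 * A * c := hgoal
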